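/- Let f : ℝ → ℝ be continuously differentiable and admit a global flow φ : ℝ × ℝ → ℝ. If x ∈ ℝ is such that the forward orbit {φ(x, t) : t ≥ 0} is bounded, then φ(x, t) converges as t → ∞ to a point z ∈ ℝ with f(z) = 0 (i.e. every bounded trajectory of a one-dimensional autonomous ODE converges to a stationary point). -/

import Mathlib

open Filter Topology

/-- Linear ODE uniqueness: if `g' = h * g` with `h` continuous and `g t0 = 0`, then `g ≡ 0`. -/
lemma linear_ode_zero (h g : ℝ → ℝ) (hh : Continuous h)
    (hg : ∀ t, HasDerivAt g (h t * g t) t) (t0 : ℝ) (h0 : g t0 = 0) : ∀ t, g t = 0 := by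
  have hint : ∀ t : ℝ, HasDerivAt (fun u => ∫ s in t0..u, h s) (h t) t := fun t =>
    intervalIntegral.integral_hasDerivAt_right (hh.intervalIntegrable _ _)
      (hh.stronglyMeasurableAtFilter _ _) hh.continuousAt
  set H : ℝ → ℝ := fun t => g t * Real.exp (-∫ s in t0..t, h s) with hH
  have hH' : ∀ t, HasDerivAt H 0 t := by
    intro t
    have h1 : HasDerivAt (fun u => Real.exp (-∫ s in t0..u, h s))
        (Real.exp (-∫ s in t0..t, h s) * (-h t)) t := by
      simpa [mul_comm] using ((hint t).neg).exp
    have h2 := (hg t).mul h1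
    rw [show (0:ℝ) = h t * g t * Real.exp (-∫ s in t0..t, h s) + g t * (Real.exp (-∫ s in t0..t, h s) * (-h t)) by ring]
    exact h2
  have hconst : ∀ t, H t = H t0 :=
    fun t => is_const_of_deriv_eq_zero (fun u => (hH' u).differentiableAt)
      (fun u => (hH' u).deriv) t t0
  intro t
  have h3 := hconst t
  rw [hH] at h3
  simp only [h0, zero_mul] at h3
  exact (mul_eq_zero.mp h3).resolve_right (Real.exp_ne_zero _)

/-- Auxiliary: a bounded solution of `u' = F(u)` with `F(u t) > 0` converges to a zero of `F`. -/
lemma aux_pos (F : ℝ → ℝ) (hF : Continuous F) (u : ℝ → ℝ)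
    (hu : ∀ t, HasDerivAt u (F (u t)) t) (hpos : ∀ t, 0 < F (u t))
    (hbdd : BddAbove (u '' Set.Ici (0 : ℝ))) :
    ∃ z : ℝ, F z = 0 ∧ Tendsto u atTop (𝓝 z) := by
  have hmono : StrictMono u := by
    apply strictMono_of_deriv_pos
    intro t
    rw [(hu t).deriv]
    exact hpos t
  -- the full range is bounded above
  obtain ⟨C, hC⟩ := hbdd
  have hbdd' : BddAbove (Set.range u) := by
    refine ⟨C, ?_⟩
    rintro _ ⟨t, rfl⟩
    rcases le_or_gt 0 t with ht | ht
    · exact hC ⟨t, ht, rfl⟩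
    · exact le_trans (hmono ht).le (hC ⟨0, Set.self_mem_Ici, rfl⟩)
  set z := ⨆ t, u t with hz
  have htend : Tendsto u atTop (𝓝 z) := tendsto_atTop_ciSup hmono.monotone hbdd'
  have hle : ∀ t, u t ≤ z := fun t => le_ciSup hbdd' t
  refine ⟨z, ?_, htend⟩
  have hFz : Tendsto (fun t => F (u t)) atTop (𝓝 (F z)) :=
    (hF.continuousAt.tendsto).comp htend
  have hFz0 : 0 ≤ F z := ge_of_tendsto hFz (Eventually.of_forall fun t => (hpos t).le)
  rcases eq_or_lt_of_le hFz0 with h | h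
  · exact h.symm
  · exfalso
    set c := F z / 2 with hc
    have hcpos : 0 < c := by positivity
    have hev : ∀ᶠ t in atTop, c < F (u t) :=
      hFz.eventually (eventually_gt_nhds (by linarith : c < F z))
    obtain ⟨T, hT⟩ := hev.exists_forall_of_atTop
    -- on [T, ∞), v t = u t - c * t is monotone
    set v : ℝ → ℝ := fun t => u t - c * t with hv
    have hv' : ∀ t, HasDerivAt v (F (u t) - c) t := fun t => by
      have := (hu t).sub ((hasDerivAt_id t).const_mul c)
      simp at this
      exact this
    have hvmono : MonotoneOn v (Set.Ici T) := by
      apply monotoneOn_of_deriv_nonneg (convex_Ici T)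
        (fun t _ => (hv' t).differentiableAt.continuousAt.continuousWithinAt)
        (fun t _ => (hv' t).differentiableAt.differentiableWithinAt)
      intro t ht
      rw [(hv' t).deriv]
      have := hT t (le_of_lt (by simpa using ht))
      linarith
    -- pick t large enough
    set t₁ := max T (T + (z - u T) / c + 1) with ht₁
    have hTt₁ : T ≤ t₁ := le_max_left _ _
    have h1 : v T ≤ v t₁ := hvmono (Set.self_mem_Ici) (Set.mem_Ici.mpr hTt₁) hTt₁
    have h2 : u T - c * T ≤ u t₁ - c * t₁ := h1
    have h3 : u t₁ ≤ z := hle t₁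
    have h4 : T + (z - u T) / c + 1 ≤ t₁ := le_max_right _ _
    have h5 : c * (t₁ - T) ≤ u t₁ - u T := by linarith
    have h6 : (z - u T) / c + 1 ≤ t₁ - T := by linarith
    have h7 : c * ((z - u T) / c + 1) ≤ c * (t₁ - T) :=
      mul_le_mul_of_nonneg_left h6 hcpos.le
    have h8 : c * ((z - u T) / c + 1) = (z - u T) + c := by
      field_simp
    linarith

/-- Every bounded trajectory of a one-dimensional autonomous ODE converges
to a stationary point: if `φ` is a global flow of the C¹ vector field `f : ℝ → ℝ` and the
forward orbit of `x` is bounded, then `φ(x, t)` converges as `t → ∞` to some zero of `f`. -/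
theorem one_dim_bounded_orbit_converges
    (f : ℝ → ℝ) (hf : ContDiff ℝ 1 f)
    (φ : ℝ → ℝ → ℝ)
    (hφ : ContDiff ℝ 1 (fun p : ℝ × ℝ => φ p.1 p.2))
    (hφ0 : ∀ x, φ x 0 = x)
    (hφ' : ∀ x t, HasDerivAt (φ x) (f (φ x t)) t)
    (x : ℝ)
    (hbdd : Bornology.IsBounded (φ x '' Set.Ici (0 : ℝ))) :
    ∃ z : ℝ, f z = 0 ∧ Tendsto (fun t => φ x t) atTop (𝓝 z) := by
  have hfc : Continuous f := hf.continuous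
  have hf' : Continuous (deriv f) := hf.continuous_deriv le_rfl
  have hfd : ∀ y, HasDerivAt f (deriv f y) y := fun y =>
    ((hf.differentiable one_ne_zero) y).hasDerivAt
  -- continuity of t ↦ φ x t
  have hφxc : Continuous (φ x) := by
    have : Continuous fun t : ℝ => (fun p : ℝ × ℝ => φ p.1 p.2) (x, t) :=
      hφ.continuous.comp (continuous_const.prodMk continuous_id)
    simpa using this
  set g : ℝ → ℝ := fun t => f (φ x t) with hg
  have hgc : Continuous g := hfc.comp hφxc
  have hg' : ∀ t, HasDerivAt g (deriv f (φ x t) * g t) t := fun t =>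
    (hfd (φ x t)).comp t (hφ' x t)
  by_cases hzero : ∃ t, g t = 0
  · -- the trajectory is constant
    obtain ⟨t0, ht0⟩ := hzero
    have hall : ∀ t, g t = 0 :=
      linear_ode_zero (fun t => deriv f (φ x t)) g (hf'.comp hφxc) hg' t0 ht0
    have hconst : ∀ t, φ x t = φ x 0 := by
      intro t
      refine is_const_of_deriv_eq_zero (fun u => (hφ' x u).differentiableAt) ?_ t 0
      intro u
      rw [(hφ' x u).deriv]
      exact hall u
    refine ⟨x, ?_, ?_⟩
    · simpa [hg, hφ0] using hall 0
    · have : (fun t => φ x t) = fun _ => x := by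
        funext t; rw [hconst t, hφ0]
      rw [this]
      exact tendsto_const_nhds
  · push_neg at hzero
    -- constant sign
    have hsign : (∀ t, 0 < g t) ∨ (∀ t, g t < 0) := by
      rcases lt_or_gt_of_ne (hzero 0) with h0 | h0
      · right
        intro t
        by_contra hcon
        push_neg at hcon
        have h1 : 0 ∈ Set.uIcc (g 0) (g t) :=
          Set.mem_uIcc.mpr (Or.inl ⟨h0.le, hcon⟩)
        obtain ⟨s, _, hs⟩ := intermediate_value_uIcc (hgc.continuousOn) h1
        exact hzero s hs
      · left
        intro t
        by_contra hcon
        push_neg at hcon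
        have h1 : 0 ∈ Set.uIcc (g 0) (g t) :=
          Set.mem_uIcc.mpr (Or.inr ⟨hcon, h0.le⟩)
        obtain ⟨s, _, hs⟩ := intermediate_value_uIcc (hgc.continuousOn) h1
        exact hzero s hs
    -- boundedness above/below of the forward orbit
    obtain ⟨R, hR⟩ := hbdd.subset_closedBall 0
    have hub : ∀ t ≥ (0:ℝ), |φ x t| ≤ R := by
      intro t ht
      have := hR ⟨t, ht, rfl⟩
      simpa [Real.closedBall_eq_Icc, abs_le, Metric.mem_closedBall,
        Real.dist_eq] using this
    rcases hsign with hpos | hneg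
    · exact aux_pos f hfc (φ x) (hφ' x) hpos
        ⟨R, by rintro _ ⟨t, ht, rfl⟩; exact (abs_le.mp (hub t ht)).2⟩
    · -- apply aux_pos to the reflected system
      have key := aux_pos (fun y => -f (-y)) (by continuity) (fun t => -(φ x t))
        (fun t => by simp; exact (hφ' x t).neg)
        (fun t => by simpa using hneg t)
        ⟨R, by rintro _ ⟨t, ht, rfl⟩; exact neg_le.mpr (abs_le.mp (hub t ht)).1⟩
      obtain ⟨z, hz1, hz2⟩ := key
      refine ⟨-z, ?_, ?_⟩
      · have : -f (-z) = 0 := hz1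
        linarith
      · have := hz2.neg
        simpa using this
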